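/- For k ≥ 1 and any v, P_{k+1}^{(l+1)}(v) = ((k+1) - (2k+1)v) P_k^{(l)}(v) − (2k+1) l P_k^{(l-1)}(v), where P_k(v) = v^k(1-v)^{k-1} and the term with P_k^{(-1)} is omitted when l = 0. -/

import Mathlib

noncomputable def P (k : ℕ) : ℝ → ℝ := fun v => v ^ k * (1 - v) ^ (k - 1)

noncomputable def Q : ℝ → ℝ := fun v => v * (1 - v)

noncomputable def R : ℝ → ℝ := fun v => 1 - 3 * v

lemma contDiff_P (k : ℕ) : ContDiff ℝ ⊤ (P k) :=
  (contDiff_id.pow _).mul ((contDiff_const.sub contDiff_id).pow _)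

lemma deriv_P_succ (k : ℕ) (hk : 1 ≤ k) :
    deriv (P (k + 1)) = fun v => (((k : ℝ) + 1) - (2 * (k : ℝ) + 1) * v) * P k v := by
  obtain ⟨m, rfl⟩ := Nat.exists_eq_add_of_le hk
  funext v
  have h1 : HasDerivAt (fun v : ℝ => v ^ (1 + m + 1)) ((↑(1 + m + 1)) * v ^ (1 + m + 1 - 1)) v :=
    hasDerivAt_pow _ v
  have h0 : HasDerivAt (fun v : ℝ => 1 - v) (-1) v := (hasDerivAt_id v).const_sub 1
  have h2 : HasDerivAt (fun v : ℝ => (1 - v) ^ (1 + m + 1 - 1))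
      ((↑(1 + m + 1 - 1)) * (1 - v) ^ (1 + m + 1 - 1 - 1) * (-1)) v := h0.pow _
  have h := (h1.mul h2).deriv
  show deriv (fun v : ℝ => v ^ (1 + m + 1) * (1 - v) ^ (1 + m + 1 - 1)) v = _
  refine h.trans ?_
  simp only [P]
  push_cast
  have e1 : 1 + m + 1 - 1 = m + 1 := by omega
  have e2 : 1 + m + 1 - 1 - 1 = m := by omega
  have e3 : 1 + m - 1 = m := by omega
  rw [e3]
  ring

lemma leib (g : ℝ → ℝ) (hg : ContDiff ℝ ⊤ g) (a b : ℝ) (l : ℕ) (v : ℝ) :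
    iteratedDeriv l (fun v => (a - b * v) * g v) v =
      (a - b * v) * iteratedDeriv l g v - b * l * iteratedDeriv (l - 1) g v := by
  induction l generalizing v with
  | zero => simp
  | succ n ih =>
    have hfun : iteratedDeriv n (fun v => (a - b * v) * g v) =
        fun v => (a - b * v) * iteratedDeriv n g v - b * n * iteratedDeriv (n - 1) g v := by
      funext w; exact ih w
    rw [iteratedDeriv_succ, hfun]
    have hdiffn : ∀ m : ℕ, DifferentiableAt ℝ (iteratedDeriv m g) v := by
      intro m
      exact (hg.differentiable_iteratedDeriv m (by simp)) v
    have hA : HasDerivAt (fun v : ℝ => a - b * v) (-b) v := by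
      simpa using ((hasDerivAt_id v).const_mul b).const_sub a
    have hB : HasDerivAt (iteratedDeriv n g) (iteratedDeriv (n + 1) g v) v := by
      rw [iteratedDeriv_succ]
      exact (hdiffn n).hasDerivAt
    have hC : HasDerivAt (fun v => b * n * iteratedDeriv (n - 1) g v)
        (b * n * iteratedDeriv (n - 1 + 1) g v) v := by
      rw [iteratedDeriv_succ]
      exact ((hdiffn (n - 1)).hasDerivAt).const_mul _
    have h := ((hA.mul hB).sub hC).deriv
    refine h.trans ?_
    rcases Nat.eq_zero_or_pos n with hn | hn
    · subst hn
      simp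
      ring
    · have e : n - 1 + 1 = n := Nat.succ_pred_eq_of_pos hn
      rw [e]
      simp only [Nat.add_sub_cancel]
      push_cast
      ring

theorem stmt_16 (k l : ℕ) (hk : 1 ≤ k) (v : ℝ) :
    iteratedDeriv (l + 1) (P (k + 1)) v =
      (((k : ℝ) + 1) - (2 * (k : ℝ) + 1) * v) * iteratedDeriv l (P k) v
        - (2 * (k : ℝ) + 1) * (l : ℝ) * iteratedDeriv (l - 1) (P k) v := by
  rw [iteratedDeriv_succ', deriv_P_succ k hk]
  exact leib (P k) (contDiff_P k) _ _ l v
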